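/- Let A be a k_A×n_A matrix and B a k_B×n_B matrix. If the matrices ((A, e, e), (h^T, 0, 1)) and ((0, 1, f^T), (g, g, B)) are totally unimodular, then their 3-sum ((A, e f^T), (g h^T, B)) is totally unimodular. -/

import Mathlib

open Matrix
set_option linter.unusedSectionVars false

namespace Stmt14Aux

/-- membership in `Set.range SignType.cast` over ℤ, concretely -/
lemma sr_iff (x : ℤ) : x ∈ Set.range (SignType.cast : SignType → ℤ) ↔ x = 0 ∨ x = 1 ∨ x = -1 := by
  constructor
  · rintro ⟨s, rfl⟩
    cases s <;> simp
  · rintro (rfl | rfl | rfl)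
    exacts [⟨0, rfl⟩, ⟨1, rfl⟩, ⟨-1, by simp⟩]

lemma sr_zero : (0 : ℤ) ∈ Set.range (SignType.cast : SignType → ℤ) := ⟨0, rfl⟩

lemma sr_mul {x y : ℤ} (hx : x ∈ Set.range (SignType.cast : SignType → ℤ))
    (hy : y ∈ Set.range (SignType.cast : SignType → ℤ)) :
    x * y ∈ Set.range (SignType.cast : SignType → ℤ) := by
  rw [sr_iff] at hx hy ⊢
  rcases hx with rfl | rfl | rfl <;> rcases hy with rfl | rfl | rfl <;> norm_num

lemma sr_neg {x : ℤ} (hx : x ∈ Set.range (SignType.cast : SignType → ℤ)) :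
    -x ∈ Set.range (SignType.cast : SignType → ℤ) := by
  rw [sr_iff] at hx ⊢; omega

/-- if a square matrix has det in range, any doubly-reindexed version does too -/
lemma sr_det_submatrix {P D : Type} [DecidableEq P] [Fintype P] [DecidableEq D] [Fintype D]
    (N : Matrix P P ℤ) (hN : N.det ∈ Set.range (SignType.cast : SignType → ℤ))
    (φ ψ : D ≃ P) :
    (N.submatrix φ ψ).det ∈ Set.range (SignType.cast : SignType → ℤ) := by
  have h1 : N.submatrix φ ψ = (N.submatrix ψ ψ).submatrix (φ.trans ψ.symm : D ≃ D) id := by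
    ext i j
    simp [Matrix.submatrix_apply]
  rw [h1, Matrix.det_permute, Matrix.det_submatrix_equiv_self]
  rcases Int.units_eq_one_or (Equiv.Perm.sign (φ.trans ψ.symm)) with h | h <;> rw [h]
  · simpa using hN
  · simpa using sr_neg hN


variable {ι₁ ι₂ κ₁ κ₂ : Type} [Fintype ι₁] [Fintype ι₂] [Fintype κ₁] [Fintype κ₂]
  [DecidableEq ι₁] [DecidableEq ι₂] [DecidableEq κ₁] [DecidableEq κ₂]

/-- the 3-sum block pattern -/
def pat (A' : Matrix ι₁ κ₁ ℤ) (B' : Matrix ι₂ κ₂ ℤ) (e' : ι₁ → ℤ) (f' : κ₂ → ℤ)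
    (g' : ι₂ → ℤ) (h' : κ₁ → ℤ) : Matrix (ι₁ ⊕ ι₂) (κ₁ ⊕ κ₂) ℤ :=
  Matrix.fromBlocks A' (Matrix.of fun i j => e' i * f' j) (Matrix.of fun i j => g' i * h' j) B'

def patX (A' : Matrix ι₁ κ₁ ℤ) (e' : ι₁ → ℤ) :
    Matrix (ι₁ ⊕ ι₂) ((κ₁ ⊕ Fin 1) ⊕ ι₂) ℤ :=
  Matrix.fromBlocks (Matrix.fromCols A' (Matrix.replicateCol (Fin 1) e')) 0 0 (1 : Matrix ι₂ ι₂ ℤ)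

def patY (B' : Matrix ι₂ κ₂ ℤ) (f' : κ₂ → ℤ) (g' : ι₂ → ℤ) (h' : κ₁ → ℤ) :
    Matrix ((κ₁ ⊕ Fin 1) ⊕ ι₂) (κ₁ ⊕ κ₂) ℤ :=
  Matrix.fromBlocks (Matrix.fromRows (1 : Matrix κ₁ κ₁ ℤ) 0)
    (Matrix.fromRows 0 (Matrix.replicateRow (Fin 1) f'))
    (Matrix.of fun i j => g' i * h' j) B'

lemma sfact (A' : Matrix ι₁ κ₁ ℤ) (B' : Matrix ι₂ κ₂ ℤ) (e' : ι₁ → ℤ) (f' : κ₂ → ℤ)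
    (g' : ι₂ → ℤ) (h' : κ₁ → ℤ) :
    pat A' B' e' f' g' h' = (patX A' e' : Matrix (ι₁ ⊕ ι₂) ((κ₁ ⊕ Fin 1) ⊕ ι₂) ℤ) * patY B' f' g' h' := by
  unfold pat patX patY
  rw [Matrix.fromBlocks_multiply]
  have hTL : (Matrix.fromCols A' (Matrix.replicateCol (Fin 1) e') : Matrix ι₁ (κ₁ ⊕ Fin 1) ℤ) * (Matrix.fromRows 1 0 : Matrix (κ₁ ⊕ Fin 1) κ₁ ℤ) = A' := by
    rw [Matrix.fromCols_mul_fromRows]; simp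
  have hTR : (Matrix.fromCols A' (Matrix.replicateCol (Fin 1) e') : Matrix ι₁ (κ₁ ⊕ Fin 1) ℤ) * (Matrix.fromRows 0 (Matrix.replicateRow (Fin 1) f') : Matrix (κ₁ ⊕ Fin 1) κ₂ ℤ)
      = Matrix.of fun i j => e' i * f' j := by
    rw [Matrix.fromCols_mul_fromRows]
    ext i j
    simp [Matrix.mul_apply, Matrix.replicateCol, Matrix.replicateRow, Fin.sum_univ_one]
  rw [hTL, hTR]
  simp


lemma key2 (A' : Matrix (κ₁ ⊕ Fin 1) κ₁ ℤ) (B' : Matrix ι₂ (Fin 1 ⊕ ι₂) ℤ)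
    (e' : κ₁ ⊕ Fin 1 → ℤ) (f' : Fin 1 ⊕ ι₂ → ℤ) (g' : ι₂ → ℤ) (h' : κ₁ → ℤ) :
    ((pat A' B' e' f' g' h').submatrix (Equiv.sumAssoc κ₁ (Fin 1) ι₂).symm id).det
      = (Matrix.fromCols A' (Matrix.replicateCol (Fin 1) e')).det
        * (Matrix.fromRows (Matrix.replicateRow (Fin 1) f') B').det := by
  rw [sfact]
  rw [← Matrix.submatrix_mul_equiv (patX A' e') (patY B' f' g' h')
    (Equiv.sumAssoc κ₁ (Fin 1) ι₂).symm ((Equiv.sumAssoc κ₁ (Fin 1) ι₂).symm) id]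
  rw [Matrix.det_mul]
  have h1 : ((patX A' e').submatrix (Equiv.sumAssoc κ₁ (Fin 1) ι₂).symm
      ((Equiv.sumAssoc κ₁ (Fin 1) ι₂).symm)).det
      = (Matrix.fromCols A' (Matrix.replicateCol (Fin 1) e')).det := by
    rw [Matrix.det_submatrix_equiv_self]
    unfold patX
    rw [Matrix.det_fromBlocks_zero₂₁]
    simp
  have h2 : ((patY B' f' g' h').submatrix ((Equiv.sumAssoc κ₁ (Fin 1) ι₂).symm) id)
      = Matrix.fromBlocks (1 : Matrix κ₁ κ₁ ℤ) 0
          (Matrix.fromRows 0 (Matrix.of fun i j => g' i * h' j))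
          (Matrix.fromRows (Matrix.replicateRow (Fin 1) f') B') := by
    ext i j
    rcases i with j₁ | (u | i₂) <;> rcases j with j₁' | (u' | j₂') <;>
      simp [patY, Equiv.sumAssoc, Matrix.one_apply, Matrix.replicateRow]
  rw [h1, h2, Matrix.det_fromBlocks_zero₁₂]
  simp

/-- a square reindexing of a product through a small type has determinant 0 -/
lemma zdet {P Q μ : Type} [Fintype P] [Fintype Q] [Fintype μ] [DecidableEq P] [DecidableEq Q]
    [DecidableEq μ] {k : ℕ} (X : Matrix P μ ℤ) (Y : Matrix μ Q ℤ)
    (ε : Fin k ≃ P) (ε' : Fin k ≃ Q) (hμ : Fintype.card μ < k) :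
    ((X * Y).submatrix ε ε').det = 0 := by
  have h0 : (X * Y).submatrix ε ε' = X.submatrix ε id * Y.submatrix id ε' := by
    rw [← Matrix.submatrix_mul_equiv X Y ε (Equiv.refl μ) ε']
    rfl
  set t := k - Fintype.card μ with ht
  have htpos : 0 < t := by omega
  have hcard : Fintype.card (Fin k) = Fintype.card (μ ⊕ Fin t) := by
    simp [Fintype.card_sum]; omega
  let em : Fin k ≃ μ ⊕ Fin t := Fintype.equivOfCardEq hcard
  have h1 : X.submatrix ε id * Y.submatrix id ε'
      = Matrix.fromCols (X.submatrix ε id) (0 : Matrix (Fin k) (Fin t) ℤ)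
        * Matrix.fromRows (Y.submatrix id ε') (0 : Matrix (Fin t) (Fin k) ℤ) := by
    rw [Matrix.fromCols_mul_fromRows]
    simp
  have h3 : Matrix.fromCols (X.submatrix ε id) (0 : Matrix (Fin k) (Fin t) ℤ)
        * Matrix.fromRows (Y.submatrix id ε') (0 : Matrix (Fin t) (Fin k) ℤ)
      = (Matrix.fromCols (X.submatrix ε id) 0).submatrix id em
        * (Matrix.fromRows (Y.submatrix id ε') 0).submatrix em id := by
    rw [Matrix.submatrix_mul_equiv, Matrix.submatrix_id_id]
  rw [h0, h1, h3, Matrix.det_mul]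
  have h2 : ((Matrix.fromRows (Y.submatrix id ε') (0 : Matrix (Fin t) (Fin k) ℤ)).submatrix
      (em : Fin k → μ ⊕ Fin t) id).det = 0 := by
    apply Matrix.det_eq_zero_of_row_eq_zero (em.symm (Sum.inr ⟨0, htpos⟩))
    intro j
    simp [Matrix.submatrix_apply]
  rw [h2, mul_zero]


section Balanced
variable (A' : Matrix ι₁ ι₁ ℤ) (B' : Matrix ι₂ ι₂ ℤ) (e' h' : ι₁ → ℤ) (f' g' : ι₂ → ℤ)

lemma balanced :
    (pat A' B' e' f' g' h').det
      = A'.det * B'.det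
        - (Matrix.fromBlocks A' (Matrix.replicateCol (Fin 1) e') (Matrix.replicateRow (Fin 1) h') 0).det
          * (Matrix.fromBlocks 0 (Matrix.replicateRow (Fin 1) f') (Matrix.replicateCol (Fin 1) g') B').det := by
  classical
  set S₀ : Matrix (ι₁ ⊕ ι₂) (ι₁ ⊕ ι₂) ℤ :=
    Matrix.fromBlocks A' (Matrix.of fun i j => e' i * f' j) 0 B' with hS₀
  set CU : Matrix (ι₁ ⊕ ι₂) (Fin 1) ℤ :=
    Matrix.replicateCol (Fin 1) (Sum.elim (fun _ => (0:ℤ)) g') with hCU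
  set RV : Matrix (Fin 1) (ι₁ ⊕ ι₂) ℤ :=
    Matrix.replicateRow (Fin 1) (Sum.elim (fun i => -h' i) (fun _ => (0:ℤ))) with hRV
  set W : Matrix ((ι₁ ⊕ ι₂) ⊕ Fin 1) ((ι₁ ⊕ ι₂) ⊕ Fin 1) ℤ :=
    Matrix.fromBlocks S₀ CU RV (1 : Matrix (Fin 1) (Fin 1) ℤ) with hW
  -- step 1 : det pat = det W
  have step1 : (pat A' B' e' f' g' h').det = W.det := by
    rw [hW, Matrix.det_fromBlocks_one₂₂]
    congr 1
    ext i j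
    rcases i with i | i <;> rcases j with j | j <;>
      simp [hS₀, hCU, hRV, pat, Matrix.mul_apply, Fin.sum_univ_one, Matrix.replicateCol, Matrix.replicateRow]
  -- step 2 : split the last row
  have hrow : W = Matrix.updateRow W (Sum.inr 0)
      ((Sum.elim (Sum.elim (fun i => -h' i) (fun _ => (0:ℤ))) (fun _ => (0:ℤ)))
        + (Sum.elim (fun _ => (0:ℤ)) (fun _ => (1:ℤ)))) := by
    ext x y
    rcases x with x | u
    · simp [Matrix.updateRow_ne]
    · fin_cases u
      rcases y with (y | y) | u' <;>
        simp [hW, hRV, Matrix.replicateRow, Matrix.one_apply, Fin.eq_zero]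
  have step2 : W.det
      = (Matrix.updateRow W (Sum.inr 0)
          (Sum.elim (Sum.elim (fun i => -h' i) (fun _ => (0:ℤ))) (fun _ => (0:ℤ)))).det
        + (Matrix.updateRow W (Sum.inr 0) (Sum.elim (fun _ => (0:ℤ)) (fun _ => (1:ℤ)))).det := by
    conv_lhs => rw [hrow]
    exact Matrix.det_updateRow_add _ _ _ _
  -- step 3 : the unit-row term gives det A' * det B'
  have step3 : (Matrix.updateRow W (Sum.inr 0) (Sum.elim (fun _ => (0:ℤ)) (fun _ => (1:ℤ)))).det
      = A'.det * B'.det := by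
    have h3 : Matrix.updateRow W (Sum.inr 0) (Sum.elim (fun _ => (0:ℤ)) (fun _ => (1:ℤ)))
        = Matrix.fromBlocks S₀ CU 0 (1 : Matrix (Fin 1) (Fin 1) ℤ) := by
      ext x y
      rcases x with x | u
      · rcases y with y | u' <;> simp [Matrix.updateRow_ne, hW]
      · fin_cases u
        rcases y with (y | y) | u' <;>
          simp [Matrix.one_apply, Fin.eq_zero]
    rw [h3, Matrix.det_fromBlocks_zero₂₁, hS₀, Matrix.det_fromBlocks_zero₂₁]
    simp
  -- step 4 : the other term
  set A'' : Matrix (ι₁ ⊕ Fin 1) ι₁ ℤ :=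
    Matrix.fromRows A' (Matrix.replicateRow (Fin 1) (fun j => -h' j)) with hA''
  set B'' : Matrix ι₂ (Fin 1 ⊕ ι₂) ℤ :=
    Matrix.fromCols (Matrix.replicateCol (Fin 1) g') B' with hB''
  set e'' : ι₁ ⊕ Fin 1 → ℤ := Sum.elim e' (fun _ => (0:ℤ)) with he''
  set f'' : Fin 1 ⊕ ι₂ → ℤ := Sum.elim (fun _ => (0:ℤ)) f' with hf''
  set T₁ : Matrix ((ι₁ ⊕ Fin 1) ⊕ ι₂) (ι₁ ⊕ (Fin 1 ⊕ ι₂)) ℤ :=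
    pat A'' B'' e'' f'' g' (fun _ => (0:ℤ)) with hT₁
  set π : ((ι₁ ⊕ ι₂) ⊕ Fin 1) ≃ (ι₁ ⊕ (Fin 1 ⊕ ι₂)) :=
    (Equiv.sumAssoc ι₁ ι₂ (Fin 1)).trans
      ((Equiv.refl ι₁).sumCongr (Equiv.sumComm ι₂ (Fin 1))) with hπ
  have step4 : Matrix.updateRow W (Sum.inr 0)
        (Sum.elim (Sum.elim (fun i => -h' i) (fun _ => (0:ℤ))) (fun _ => (0:ℤ)))
      = (T₁.submatrix (Equiv.sumAssoc ι₁ (Fin 1) ι₂).symm id).submatrix π π := by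
    ext x y
    rcases x with (x | x) | u
    · rcases y with (y | y) | u' <;>
        simp [hT₁, pat, hπ, hA'', hB'', he'', hf'', Equiv.sumAssoc, Equiv.sumComm,
          Matrix.updateRow_ne, hW, hS₀, hCU, hRV, Matrix.replicateCol, Matrix.replicateRow]
    · rcases y with (y | y) | u' <;>
        simp [hT₁, pat, hπ, hA'', hB'', he'', hf'', Equiv.sumAssoc, Equiv.sumComm,
          Matrix.updateRow_ne, hW, hS₀, hCU, hRV, Matrix.replicateCol, Matrix.replicateRow]
    · fin_cases u
      rcases y with (y | y) | u' <;>
        simp [hT₁, pat, hπ, hA'', hB'', he'', hf'', Equiv.sumAssoc, Equiv.sumComm,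
          hW, hS₀, hCU, hRV, Matrix.replicateCol, Matrix.replicateRow, Fin.eq_zero]
  have step5 : ((T₁.submatrix (Equiv.sumAssoc ι₁ (Fin 1) ι₂).symm id).submatrix π π).det
      = (Matrix.fromCols A'' (Matrix.replicateCol (Fin 1) e'')).det
        * (Matrix.fromRows (Matrix.replicateRow (Fin 1) f'') B'').det := by
    rw [Matrix.det_submatrix_equiv_self, hT₁, key2]
  -- step 6 : identify the two factors
  have step6 : (Matrix.fromCols A'' (Matrix.replicateCol (Fin 1) e'')).det
      = -(Matrix.fromBlocks A' (Matrix.replicateCol (Fin 1) e') (Matrix.replicateRow (Fin 1) h') 0).det := by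
    set αM : Matrix (ι₁ ⊕ Fin 1) (ι₁ ⊕ Fin 1) ℤ :=
      Matrix.fromBlocks A' (Matrix.replicateCol (Fin 1) e') (Matrix.replicateRow (Fin 1) h') 0 with hαM
    have h6 : Matrix.fromCols A'' (Matrix.replicateCol (Fin 1) e'')
        = Matrix.updateRow αM (Sum.inr 0) ((-1 : ℤ) • (Sum.elim h' (fun _ => (0:ℤ)))) := by
      ext x y
      rcases x with x | u
      · rcases y with y | u' <;>
          simp [hαM, hA'', he'', Matrix.updateRow_ne, Matrix.replicateCol, Matrix.replicateRow]
      · fin_cases u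
        rcases y with y | u' <;>
          simp [hαM, hA'', he'', Matrix.replicateCol, Matrix.replicateRow, Fin.eq_zero]
    have h7 : Matrix.updateRow αM (Sum.inr 0) (Sum.elim h' (fun _ => (0:ℤ))) = αM := by
      ext x y
      rcases x with x | u
      · simp [Matrix.updateRow_ne]
      · fin_cases u
        rcases y with y | u' <;> simp [hαM, Matrix.replicateCol, Matrix.replicateRow, Fin.eq_zero]
    rw [h6, Matrix.det_updateRow_smul, h7]
    ring
  have step7 : Matrix.fromRows (Matrix.replicateRow (Fin 1) f'') B''
      = Matrix.fromBlocks 0 (Matrix.replicateRow (Fin 1) f') (Matrix.replicateCol (Fin 1) g') B' := by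
    ext x y
    rcases x with u | x <;> rcases y with u' | y <;>
      simp [hf'', hB'', Matrix.replicateCol, Matrix.replicateRow]
  rw [step1, step2, step3]
  rw [step4, step5, step6, step7]
  ring
end Balanced

lemma colsplitA (A' : Matrix ι₁ ι₁ ℤ) (e' h' : ι₁ → ℤ) :
    (Matrix.fromBlocks A' (Matrix.replicateCol (Fin 1) e') (Matrix.replicateRow (Fin 1) h')
        (Matrix.of fun _ _ => (1:ℤ))).det
      = A'.det + (Matrix.fromBlocks A' (Matrix.replicateCol (Fin 1) e') (Matrix.replicateRow (Fin 1) h') 0).det := by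
  set αM : Matrix (ι₁ ⊕ Fin 1) (ι₁ ⊕ Fin 1) ℤ :=
    Matrix.fromBlocks A' (Matrix.replicateCol (Fin 1) e') (Matrix.replicateRow (Fin 1) h') 0 with hαM
  have h1 : Matrix.fromBlocks A' (Matrix.replicateCol (Fin 1) e') (Matrix.replicateRow (Fin 1) h')
      (Matrix.of fun _ _ => (1:ℤ))
      = Matrix.updateCol αM (Sum.inr 0)
        ((Sum.elim e' (fun _ => (0:ℤ))) + (Sum.elim (fun _ => (0:ℤ)) (fun _ => (1:ℤ)))) := by
    ext x y
    rcases y with y | u'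
    · rcases x with x | u <;> simp [Matrix.updateCol_ne, hαM]
    · fin_cases u'
      rcases x with x | u <;> simp [hαM, Matrix.replicateCol, Matrix.replicateRow, Fin.eq_zero]
  rw [h1, Matrix.det_updateCol_add]
  have h2 : Matrix.updateCol αM (Sum.inr 0) (Sum.elim e' (fun _ => (0:ℤ))) = αM := by
    ext x y
    rcases y with y | u'
    · simp [Matrix.updateCol_ne]
    · fin_cases u'
      rcases x with x | u <;> simp [hαM, Matrix.replicateCol, Matrix.replicateRow, Fin.eq_zero]
  have h3 : Matrix.updateCol αM (Sum.inr 0) (Sum.elim (fun _ => (0:ℤ)) (fun _ => (1:ℤ)))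
      = Matrix.fromBlocks A' 0 (Matrix.replicateRow (Fin 1) h') (Matrix.of fun _ _ => (1:ℤ)) := by
    ext x y
    rcases y with y | u'
    · rcases x with x | u <;> simp [Matrix.updateCol_ne, hαM]
    · fin_cases u'
      rcases x with x | u <;> simp [hαM, Fin.eq_zero]
  rw [h2, h3, Matrix.det_fromBlocks_zero₁₂]
  have : (Matrix.of fun _ _ => (1:ℤ) : Matrix (Fin 1) (Fin 1) ℤ).det = 1 := by
    rw [Matrix.det_fin_one]; rfl
  rw [this]; ring

lemma colsplitB (B' : Matrix ι₂ ι₂ ℤ) (f' g' : ι₂ → ℤ) :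
    (Matrix.fromBlocks (Matrix.of fun _ _ => (1:ℤ)) (Matrix.replicateRow (Fin 1) f')
        (Matrix.replicateCol (Fin 1) g') B').det
      = B'.det + (Matrix.fromBlocks 0 (Matrix.replicateRow (Fin 1) f') (Matrix.replicateCol (Fin 1) g') B').det := by
  set βM : Matrix (Fin 1 ⊕ ι₂) (Fin 1 ⊕ ι₂) ℤ :=
    Matrix.fromBlocks 0 (Matrix.replicateRow (Fin 1) f') (Matrix.replicateCol (Fin 1) g') B' with hβM
  have h1 : Matrix.fromBlocks (Matrix.of fun _ _ => (1:ℤ)) (Matrix.replicateRow (Fin 1) f')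
      (Matrix.replicateCol (Fin 1) g') B'
      = Matrix.updateCol βM (Sum.inl 0)
        ((Sum.elim (fun _ => (0:ℤ)) g') + (Sum.elim (fun _ => (1:ℤ)) (fun _ => (0:ℤ)))) := by
    ext x y
    rcases y with u' | y
    · fin_cases u'
      rcases x with u | x <;> simp [hβM, Matrix.replicateCol, Matrix.replicateRow, Fin.eq_zero]
    · rcases x with u | x <;> simp [Matrix.updateCol_ne, hβM]
  rw [h1, Matrix.det_updateCol_add]
  have h2 : Matrix.updateCol βM (Sum.inl 0) (Sum.elim (fun _ => (0:ℤ)) g') = βM := by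
    ext x y
    rcases y with u' | y
    · fin_cases u'
      rcases x with u | x <;> simp [hβM, Matrix.replicateCol, Matrix.replicateRow, Fin.eq_zero]
    · simp [Matrix.updateCol_ne]
  have h3 : Matrix.updateCol βM (Sum.inl 0) (Sum.elim (fun _ => (1:ℤ)) (fun _ => (0:ℤ)))
      = Matrix.fromBlocks (Matrix.of fun _ _ => (1:ℤ)) (Matrix.replicateRow (Fin 1) f') 0 B' := by
    ext x y
    rcases y with u' | y
    · fin_cases u'
      rcases x with u | x <;> simp [hβM, Fin.eq_zero]
    · rcases x with u | x <;> simp [Matrix.updateCol_ne, hβM]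
  rw [h2, h3, Matrix.det_fromBlocks_zero₂₁]
  have : (Matrix.of fun _ _ => (1:ℤ) : Matrix (Fin 1) (Fin 1) ℤ).det = 1 := by
    rw [Matrix.det_fin_one]; rfl
  rw [this]; ring

lemma sr_combo {a b α β : ℤ}
    (ha : a ∈ Set.range (SignType.cast : SignType → ℤ))
    (hb : b ∈ Set.range (SignType.cast : SignType → ℤ))
    (hα : α ∈ Set.range (SignType.cast : SignType → ℤ))
    (hβ : β ∈ Set.range (SignType.cast : SignType → ℤ))
    (haα : a + α ∈ Set.range (SignType.cast : SignType → ℤ))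
    (hbβ : b + β ∈ Set.range (SignType.cast : SignType → ℤ)) :
    a * b - α * β ∈ Set.range (SignType.cast : SignType → ℤ) := by
  rw [sr_iff] at ha hb hα hβ haα hbβ ⊢
  rcases ha with rfl | rfl | rfl <;> rcases hb with rfl | rfl | rfl <;>
    rcases hα with rfl | rfl | rfl <;> rcases hβ with rfl | rfl | rfl <;> omega

lemma decomp {k : ℕ} {P Q : Type} (f : Fin k → P ⊕ Q) :
    ∃ (k₁ k₂ : ℕ) (ε : Fin k ≃ Fin k₁ ⊕ Fin k₂) (f₁ : Fin k₁ → P) (f₂ : Fin k₂ → Q),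
      ∀ i, f i = Sum.elim (Sum.inl ∘ f₁) (Sum.inr ∘ f₂) (ε i) := by
  classical
  let p : Fin k → Prop := fun i => (f i).isLeft
  let e₁ := Fintype.equivFin {x // p x}
  let e₂ := Fintype.equivFin {x // ¬ p x}
  have hf₁ : ∀ y : {x // p x}, ∃ a, f y.1 = Sum.inl a := by
    intro y
    exact Sum.isLeft_iff.mp y.2
  have hf₂ : ∀ y : {x // ¬ p x}, ∃ b, f y.1 = Sum.inr b := by
    intro y
    exact Sum.isRight_iff.mp (Sum.not_isLeft.mp y.2)
  refine ⟨_, _, (Equiv.sumCompl p).symm.trans (e₁.sumCongr e₂),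
    fun y => (hf₁ (e₁.symm y)).choose, fun y => (hf₂ (e₂.symm y)).choose, ?_⟩
  intro i
  by_cases hi : p i
  · have h1 : (Equiv.sumCompl p).symm i = Sum.inl ⟨i, hi⟩ := by
      simp only [Equiv.sumCompl, Equiv.coe_fn_symm_mk]
      rw [dif_pos hi]
    simp only [Equiv.trans_apply, h1, Equiv.sumCongr_apply, Sum.map_inl, Sum.elim_inl,
      Function.comp_apply]
    have := (hf₁ (e₁.symm (e₁ ⟨i, hi⟩))).choose_spec
    rw [e₁.symm_apply_apply] at this ⊢
    exact this
  · have h1 : (Equiv.sumCompl p).symm i = Sum.inr ⟨i, hi⟩ := by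
      simp only [Equiv.sumCompl, Equiv.coe_fn_symm_mk]
      rw [dif_neg hi]
    simp only [Equiv.trans_apply, h1, Equiv.sumCongr_apply, Sum.map_inr, Sum.elim_inr,
      Function.comp_apply]
    have := (hf₂ (e₂.symm (e₂ ⟨i, hi⟩))).choose_spec
    rw [e₂.symm_apply_apply] at this ⊢
    exact this


section Aux
variable {X Y W Z : Type} [Fintype X] [Fintype Y] [Fintype W] [Fintype Z]
  [DecidableEq X] [DecidableEq Y] [DecidableEq W] [DecidableEq Z]

lemma aux (A : Matrix X Y ℤ) (B : Matrix W Z ℤ) (e : X → ℤ) (f : Z → ℤ) (g : W → ℤ) (h : Y → ℤ)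
    (hM10 : (Matrix.fromBlocks A (Matrix.replicateCol (Fin 1) e) (Matrix.replicateRow (Fin 1) h)
      (Matrix.of fun _ _ => (0:ℤ))).IsTotallyUnimodular)
    (hM11 : (Matrix.fromBlocks A (Matrix.replicateCol (Fin 1) e) (Matrix.replicateRow (Fin 1) h)
      (Matrix.of fun _ _ => (1:ℤ))).IsTotallyUnimodular)
    (hM20 : (Matrix.fromBlocks (Matrix.of fun _ _ => (0:ℤ)) (Matrix.replicateRow (Fin 1) f)
      (Matrix.replicateCol (Fin 1) g) B).IsTotallyUnimodular)
    (hM21 : (Matrix.fromBlocks (Matrix.of fun _ _ => (1:ℤ)) (Matrix.replicateRow (Fin 1) f)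
      (Matrix.replicateCol (Fin 1) g) B).IsTotallyUnimodular)
    {k k₁ k₂ l₁ l₂ : ℕ} (hk : k = k₁ + k₂) (hl : k = l₁ + l₂) (hkl : l₁ ≤ k₁)
    (f₁ : Fin k₁ → X) (f₂ : Fin k₂ → W) (g₁ : Fin l₁ → Y) (g₂ : Fin l₂ → Z)
    (ε : Fin k ≃ Fin k₁ ⊕ Fin k₂) (ε' : Fin k ≃ Fin l₁ ⊕ Fin l₂) :
    ((pat (A.submatrix f₁ g₁) (B.submatrix f₂ g₂) (e ∘ f₁) (f ∘ g₂) (g ∘ f₂) (h ∘ g₁)).submatrix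
      ε ε').det ∈ Set.range (SignType.cast : SignType → ℤ) := by
  by_cases hc1 : k₁ = l₁
  · -- balanced case
    subst hc1
    have hc2 : k₂ = l₂ := by omega
    subst hc2
    apply sr_det_submatrix
    rw [balanced]
    -- memberships
    have ha : (A.submatrix f₁ g₁).det ∈ Set.range (SignType.cast : SignType → ℤ) := by
      have hA : A.IsTotallyUnimodular := by
        have h0 := hM10.submatrix (Sum.inl : X → X ⊕ Fin 1) (Sum.inl : Y → Y ⊕ Fin 1)
        have h1 : (Matrix.fromBlocks A (Matrix.replicateCol (Fin 1) e) (Matrix.replicateRow (Fin 1) h)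
            (Matrix.of fun _ _ => (0:ℤ))).submatrix (Sum.inl : X → X ⊕ Fin 1)
            (Sum.inl : Y → Y ⊕ Fin 1) = A := by
          ext i j; rfl
        rwa [h1] at h0
      rw [Matrix.isTotallyUnimodular_iff] at hA
      exact hA _ f₁ g₁
    have hb : (B.submatrix f₂ g₂).det ∈ Set.range (SignType.cast : SignType → ℤ) := by
      have hB : B.IsTotallyUnimodular := by
        have h0 := hM20.submatrix (Sum.inr : W → Fin 1 ⊕ W) (Sum.inr : Z → Fin 1 ⊕ Z)
        have h1 : (Matrix.fromBlocks (Matrix.of fun _ _ => (0:ℤ)) (Matrix.replicateRow (Fin 1) f)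
            (Matrix.replicateCol (Fin 1) g) B).submatrix (Sum.inr : W → Fin 1 ⊕ W)
            (Sum.inr : Z → Fin 1 ⊕ Z) = B := by
          ext i j; rfl
        rwa [h1] at h0
      rw [Matrix.isTotallyUnimodular_iff] at hB
      exact hB _ f₂ g₂
    have hα : (Matrix.fromBlocks (A.submatrix f₁ g₁) (Matrix.replicateCol (Fin 1) (e ∘ f₁))
        (Matrix.replicateRow (Fin 1) (h ∘ g₁)) 0).det ∈ Set.range (SignType.cast : SignType → ℤ) := by
      have hsub : Matrix.fromBlocks (A.submatrix f₁ g₁) (Matrix.replicateCol (Fin 1) (e ∘ f₁))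
          (Matrix.replicateRow (Fin 1) (h ∘ g₁)) 0
          = (Matrix.fromBlocks A (Matrix.replicateCol (Fin 1) e) (Matrix.replicateRow (Fin 1) h)
            (Matrix.of fun _ _ => (0:ℤ))).submatrix (Sum.map f₁ id) (Sum.map g₁ id) := by
        ext x y
        rcases x with x | u <;> rcases y with y | u' <;>
          simp [Matrix.replicateCol, Matrix.replicateRow]
      rw [hsub]
      exact (Matrix.isTotallyUnimodular_iff_fintype.{0} _).mp hM10 (Fin k₁ ⊕ Fin 1) _ _
    have hβ : (Matrix.fromBlocks 0 (Matrix.replicateRow (Fin 1) (f ∘ g₂))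
        (Matrix.replicateCol (Fin 1) (g ∘ f₂)) (B.submatrix f₂ g₂)).det
        ∈ Set.range (SignType.cast : SignType → ℤ) := by
      have hsub : Matrix.fromBlocks 0 (Matrix.replicateRow (Fin 1) (f ∘ g₂))
          (Matrix.replicateCol (Fin 1) (g ∘ f₂)) (B.submatrix f₂ g₂)
          = (Matrix.fromBlocks (Matrix.of fun _ _ => (0:ℤ)) (Matrix.replicateRow (Fin 1) f)
            (Matrix.replicateCol (Fin 1) g) B).submatrix (Sum.map id f₂) (Sum.map id g₂) := by
        ext x y
        rcases x with u | x <;> rcases y with u' | y <;>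
          simp [Matrix.replicateCol, Matrix.replicateRow]
      rw [hsub]
      exact (Matrix.isTotallyUnimodular_iff_fintype.{0} _).mp hM20 (Fin 1 ⊕ Fin k₂) _ _
    have haα : (A.submatrix f₁ g₁).det + (Matrix.fromBlocks (A.submatrix f₁ g₁)
        (Matrix.replicateCol (Fin 1) (e ∘ f₁)) (Matrix.replicateRow (Fin 1) (h ∘ g₁)) 0).det
        ∈ Set.range (SignType.cast : SignType → ℤ) := by
      rw [← colsplitA]
      have hsub : Matrix.fromBlocks (A.submatrix f₁ g₁) (Matrix.replicateCol (Fin 1) (e ∘ f₁))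
          (Matrix.replicateRow (Fin 1) (h ∘ g₁)) (Matrix.of fun _ _ => (1:ℤ))
          = (Matrix.fromBlocks A (Matrix.replicateCol (Fin 1) e) (Matrix.replicateRow (Fin 1) h)
            (Matrix.of fun _ _ => (1:ℤ))).submatrix (Sum.map f₁ id) (Sum.map g₁ id) := by
        ext x y
        rcases x with x | u <;> rcases y with y | u' <;>
          simp [Matrix.replicateCol, Matrix.replicateRow]
      rw [hsub]
      exact (Matrix.isTotallyUnimodular_iff_fintype.{0} _).mp hM11 (Fin k₁ ⊕ Fin 1) _ _
    have hbβ : (B.submatrix f₂ g₂).det + (Matrix.fromBlocks 0 (Matrix.replicateRow (Fin 1) (f ∘ g₂))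
        (Matrix.replicateCol (Fin 1) (g ∘ f₂)) (B.submatrix f₂ g₂)).det
        ∈ Set.range (SignType.cast : SignType → ℤ) := by
      rw [← colsplitB]
      have hsub : Matrix.fromBlocks (Matrix.of fun _ _ => (1:ℤ)) (Matrix.replicateRow (Fin 1) (f ∘ g₂))
          (Matrix.replicateCol (Fin 1) (g ∘ f₂)) (B.submatrix f₂ g₂)
          = (Matrix.fromBlocks (Matrix.of fun _ _ => (1:ℤ)) (Matrix.replicateRow (Fin 1) f)
            (Matrix.replicateCol (Fin 1) g) B).submatrix (Sum.map id f₂) (Sum.map id g₂) := by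
        ext x y
        rcases x with u | x <;> rcases y with u' | y <;>
          simp [Matrix.replicateCol, Matrix.replicateRow]
      rw [hsub]
      exact (Matrix.isTotallyUnimodular_iff_fintype.{0} _).mp hM21 (Fin 1 ⊕ Fin k₂) _ _
    exact sr_combo ha hb hα hβ haα hbβ
  · by_cases hc2 : k₁ = l₁ + 1
    · -- unbalanced by one
      have hc3 : l₂ = k₂ + 1 := by omega
      let eκ : Fin l₁ ⊕ Fin 1 ≃ Fin k₁ := finSumFinEquiv.trans (finCongr (by omega))
      let eβ : Fin 1 ⊕ Fin k₂ ≃ Fin l₂ := finSumFinEquiv.trans (finCongr (by omega))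
      set T : Matrix ((Fin l₁ ⊕ Fin 1) ⊕ Fin k₂) (Fin l₁ ⊕ (Fin 1 ⊕ Fin k₂)) ℤ :=
        pat (A.submatrix (f₁ ∘ eκ) g₁) (B.submatrix f₂ (g₂ ∘ eβ))
          (e ∘ (f₁ ∘ eκ)) ((f ∘ g₂) ∘ eβ) (g ∘ f₂) (h ∘ g₁) with hT
      have hTS : T = (pat (A.submatrix f₁ g₁) (B.submatrix f₂ g₂) (e ∘ f₁) (f ∘ g₂)
          (g ∘ f₂) (h ∘ g₁)).submatrix (Sum.map eκ id) (Sum.map id eβ) := by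
        ext x y
        rcases x with x | x <;> rcases y with y | y <;> simp [hT, pat]
      have hST : (pat (A.submatrix f₁ g₁) (B.submatrix f₂ g₂) (e ∘ f₁) (f ∘ g₂)
          (g ∘ f₂) (h ∘ g₁)).submatrix ε ε'
          = T.submatrix (ε.trans (eκ.sumCongr (Equiv.refl (Fin k₂))).symm)
            (ε'.trans ((Equiv.refl (Fin l₁)).sumCongr eβ).symm) := by
        ext i j
        rw [hTS]
        simp only [Matrix.submatrix_apply, Equiv.trans_apply]
        congr 1
        · rcases hε : ε i with x | x <;>
            simp [hε, Equiv.sumCongr_apply, Equiv.sumCongr_symm]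
        · rcases hε : ε' j with y | y <;>
            simp [hε, Equiv.sumCongr_apply, Equiv.sumCongr_symm]
      rw [hST]
      have hsq : T.submatrix (ε.trans (eκ.sumCongr (Equiv.refl (Fin k₂))).symm)
            (ε'.trans ((Equiv.refl (Fin l₁)).sumCongr eβ).symm)
          = (T.submatrix (Equiv.sumAssoc (Fin l₁) (Fin 1) (Fin k₂)).symm id).submatrix
            ((ε.trans (eκ.sumCongr (Equiv.refl (Fin k₂))).symm).trans
              (Equiv.sumAssoc (Fin l₁) (Fin 1) (Fin k₂)))
            (ε'.trans ((Equiv.refl (Fin l₁)).sumCongr eβ).symm) := by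
        ext i j
        simp
      rw [hsq]
      apply sr_det_submatrix
      rw [hT, key2]
      apply sr_mul
      · have hsub : Matrix.fromCols (A.submatrix (f₁ ∘ eκ) g₁)
            (Matrix.replicateCol (Fin 1) (e ∘ (f₁ ∘ eκ)))
            = (Matrix.fromBlocks A (Matrix.replicateCol (Fin 1) e) (Matrix.replicateRow (Fin 1) h)
              (Matrix.of fun _ _ => (0:ℤ))).submatrix
              (fun y => Sum.inl (f₁ (eκ y))) (Sum.map g₁ id) := by
          ext x y
          rcases y with y | u' <;> simp [Matrix.replicateCol, Matrix.fromCols]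
        rw [hsub]
        exact (Matrix.isTotallyUnimodular_iff_fintype.{0} _).mp hM10 (Fin l₁ ⊕ Fin 1) _ _
      · have hsub : Matrix.fromRows (Matrix.replicateRow (Fin 1) ((f ∘ g₂) ∘ eβ))
            (B.submatrix f₂ (g₂ ∘ eβ))
            = (Matrix.fromBlocks (Matrix.of fun _ _ => (0:ℤ)) (Matrix.replicateRow (Fin 1) f)
              (Matrix.replicateCol (Fin 1) g) B).submatrix
              (Sum.map id f₂) (fun z => Sum.inr (g₂ (eβ z))) := by
          ext x y
          rcases x with u | x <;> simp [Matrix.replicateRow, Matrix.fromRows] <;> rfl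
        rw [hsub]
        exact (Matrix.isTotallyUnimodular_iff_fintype.{0} _).mp hM20 (Fin 1 ⊕ Fin k₂) _ _
    · -- degenerate case
      have hdeg : l₁ + 1 < k₁ := by omega
      rw [sfact]
      have hcard : Fintype.card ((Fin l₁ ⊕ Fin 1) ⊕ Fin k₂) < k := by
        simp [Fintype.card_sum]
        omega
      rw [zdet _ _ ε ε' hcard]
      exact sr_zero

end Aux

lemma pat_transpose (A' : Matrix ι₁ κ₁ ℤ) (B' : Matrix ι₂ κ₂ ℤ) (e' : ι₁ → ℤ) (f' : κ₂ → ℤ)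
    (g' : ι₂ → ℤ) (h' : κ₁ → ℤ) :
    (pat A' B' e' f' g' h')ᵀ = pat A'ᵀ B'ᵀ h' g' f' e' := by
  ext x y
  rcases x with x | x <;> rcases y with y | y <;> simp [pat] <;> ring

end Stmt14Aux

/-- The 3-sum `((A, efᵀ), (ghᵀ, B))` of the totally unimodular matrices
`((A, e, e), (hᵀ, 0, 1))` and `((0, 1, fᵀ), (g, g, B))` is totally unimodular. -/
theorem stmt14 (kA nA kB nB : ℕ)
    (A : Matrix (Fin kA) (Fin nA) ℤ) (B : Matrix (Fin kB) (Fin nB) ℤ)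
    (e : Fin kA → ℤ) (f : Fin nB → ℤ) (g : Fin kB → ℤ) (h : Fin nA → ℤ)
    (h₁ : (Matrix.of fun (i : Fin kA ⊕ Unit) (j : Fin nA ⊕ Fin 2) =>
      match i, j with
      | Sum.inl i, Sum.inl j => A i j
      | Sum.inl i, Sum.inr _ => e i
      | Sum.inr _, Sum.inl j => h j
      | Sum.inr _, Sum.inr c => (c.val : ℤ)).IsTotallyUnimodular)
    (h₂ : (Matrix.of fun (i : Unit ⊕ Fin kB) (j : Fin 2 ⊕ Fin nB) =>
      match i, j with
      | Sum.inl _, Sum.inl c => (c.val : ℤ)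
      | Sum.inl _, Sum.inr j => f j
      | Sum.inr i, Sum.inl _ => g i
      | Sum.inr i, Sum.inr j => B i j).IsTotallyUnimodular) :
    (Matrix.fromBlocks A (Matrix.of fun i j => e i * f j)
      (Matrix.of fun i j => g i * h j) B).IsTotallyUnimodular := by
  open Stmt14Aux in
  rw [Matrix.isTotallyUnimodular_iff]
  intro k fr gc
  obtain ⟨k₁, k₂, ε, f₁, f₂, hfr⟩ := Stmt14Aux.decomp fr
  obtain ⟨l₁, l₂, ε', g₁, g₂, hgc⟩ := Stmt14Aux.decomp gc
  have hk : k = k₁ + k₂ := by simpa using Fintype.card_congr ε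
  have hl : k = l₁ + l₂ := by simpa using Fintype.card_congr ε'
  -- the four bordered matrices on the A side
  have hM1 : ∀ c : Fin 2, (Matrix.fromBlocks A (Matrix.replicateCol (Fin 1) e) (Matrix.replicateRow (Fin 1) h)
      (Matrix.of fun _ _ => (c.val : ℤ))).IsTotallyUnimodular := by
    intro c
    have heq : Matrix.fromBlocks A (Matrix.replicateCol (Fin 1) e) (Matrix.replicateRow (Fin 1) h)
        (Matrix.of fun _ _ => (c.val : ℤ))
        = (Matrix.of fun (i : Fin kA ⊕ Unit) (j : Fin nA ⊕ Fin 2) =>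
            match i, j with
            | Sum.inl i, Sum.inl j => A i j
            | Sum.inl i, Sum.inr _ => e i
            | Sum.inr _, Sum.inl j => h j
            | Sum.inr _, Sum.inr c => (c.val : ℤ)).submatrix
            (Sum.map id (fun _ => ())) (Sum.map id (fun _ : Fin 1 => c)) := by
      ext x y
      rcases x with x | u <;> rcases y with y | u' <;>
        simp [Matrix.replicateCol, Matrix.replicateRow]
    rw [heq]
    exact h₁.submatrix _ _
  have hM2 : ∀ c : Fin 2, (Matrix.fromBlocks (Matrix.of fun _ _ => (c.val : ℤ))
      (Matrix.replicateRow (Fin 1) f) (Matrix.replicateCol (Fin 1) g) B).IsTotallyUnimodular := by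
    intro c
    have heq : Matrix.fromBlocks (Matrix.of fun _ _ => (c.val : ℤ))
        (Matrix.replicateRow (Fin 1) f) (Matrix.replicateCol (Fin 1) g) B
        = (Matrix.of fun (i : Unit ⊕ Fin kB) (j : Fin 2 ⊕ Fin nB) =>
            match i, j with
            | Sum.inl _, Sum.inl c => (c.val : ℤ)
            | Sum.inl _, Sum.inr j => f j
            | Sum.inr i, Sum.inl _ => g i
            | Sum.inr i, Sum.inr j => B i j).submatrix
            (Sum.map (fun _ => ()) id) (Sum.map (fun _ : Fin 1 => c) id) := by
      ext x y
      rcases x with u | x <;> rcases y with u' | y <;>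
        simp [Matrix.replicateCol, Matrix.replicateRow]
    rw [heq]
    exact h₂.submatrix _ _
  have hM10 := hM1 0
  have hM11 := hM1 1
  have hM20 := hM2 0
  have hM21 := hM2 1
  norm_num at hM10 hM11 hM20 hM21
  have hC : (Matrix.fromBlocks A (Matrix.of fun i j => e i * f j)
        (Matrix.of fun i j => g i * h j) B).submatrix fr gc
      = (Stmt14Aux.pat (A.submatrix f₁ g₁) (B.submatrix f₂ g₂) (e ∘ f₁) (f ∘ g₂)
        (g ∘ f₂) (h ∘ g₁)).submatrix ε ε' := by
    ext i j
    rw [Matrix.submatrix_apply, hfr i, hgc j, Matrix.submatrix_apply]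
    rcases hx : ε i with x | x <;> rcases hy : ε' j with y | y <;>
      simp [Stmt14Aux.pat]
  rw [hC]
  rcases le_or_gt l₁ k₁ with hle | hlt
  · exact Stmt14Aux.aux A B e f g h hM10 hM11 hM20 hM21 hk hl hle f₁ f₂ g₁ g₂ ε ε'
  · have hdet : ((Stmt14Aux.pat (A.submatrix f₁ g₁) (B.submatrix f₂ g₂) (e ∘ f₁) (f ∘ g₂)
          (g ∘ f₂) (h ∘ g₁)).submatrix ε ε').det
        = ((Stmt14Aux.pat (Aᵀ.submatrix g₁ f₁) (Bᵀ.submatrix g₂ f₂) (h ∘ g₁) (g ∘ f₂)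
          (f ∘ g₂) (e ∘ f₁)).submatrix ε' ε).det := by
      have hmt : (Stmt14Aux.pat (A.submatrix f₁ g₁) (B.submatrix f₂ g₂) (e ∘ f₁) (f ∘ g₂)
          (g ∘ f₂) (h ∘ g₁))ᵀ
          = Stmt14Aux.pat (Aᵀ.submatrix g₁ f₁) (Bᵀ.submatrix g₂ f₂) (h ∘ g₁) (g ∘ f₂)
            (f ∘ g₂) (e ∘ f₁) := by
        rw [Stmt14Aux.pat_transpose, Matrix.transpose_submatrix, Matrix.transpose_submatrix]
      rw [← Matrix.det_transpose (((Stmt14Aux.pat (A.submatrix f₁ g₁) (B.submatrix f₂ g₂)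
        (e ∘ f₁) (f ∘ g₂) (g ∘ f₂) (h ∘ g₁)).submatrix ε ε')), Matrix.transpose_submatrix, hmt]
    rw [hdet]
    have hM10' : (Matrix.fromBlocks Aᵀ (Matrix.replicateCol (Fin 1) h) (Matrix.replicateRow (Fin 1) e)
        (Matrix.of fun _ _ => (0:ℤ))).IsTotallyUnimodular := by
      have heq : Matrix.fromBlocks Aᵀ (Matrix.replicateCol (Fin 1) h) (Matrix.replicateRow (Fin 1) e)
          (Matrix.of fun _ _ => (0:ℤ))
          = (Matrix.fromBlocks A (Matrix.replicateCol (Fin 1) e) (Matrix.replicateRow (Fin 1) h)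
            (Matrix.of fun _ _ => (0:ℤ)))ᵀ := by
        ext x y
        rcases x with x | u <;> rcases y with y | u' <;> rfl
      rw [heq]
      exact hM10.transpose
    have hM11' : (Matrix.fromBlocks Aᵀ (Matrix.replicateCol (Fin 1) h) (Matrix.replicateRow (Fin 1) e)
        (Matrix.of fun _ _ => (1:ℤ))).IsTotallyUnimodular := by
      have heq : Matrix.fromBlocks Aᵀ (Matrix.replicateCol (Fin 1) h) (Matrix.replicateRow (Fin 1) e)
          (Matrix.of fun _ _ => (1:ℤ))
          = (Matrix.fromBlocks A (Matrix.replicateCol (Fin 1) e) (Matrix.replicateRow (Fin 1) h)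
            (Matrix.of fun _ _ => (1:ℤ)))ᵀ := by
        ext x y
        rcases x with x | u <;> rcases y with y | u' <;> rfl
      rw [heq]
      exact hM11.transpose
    have hM20' : (Matrix.fromBlocks (Matrix.of fun _ _ => (0:ℤ)) (Matrix.replicateRow (Fin 1) g)
        (Matrix.replicateCol (Fin 1) f) Bᵀ).IsTotallyUnimodular := by
      have heq : Matrix.fromBlocks (Matrix.of fun _ _ => (0:ℤ)) (Matrix.replicateRow (Fin 1) g)
          (Matrix.replicateCol (Fin 1) f) Bᵀ
          = (Matrix.fromBlocks (Matrix.of fun _ _ => (0:ℤ)) (Matrix.replicateRow (Fin 1) f)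
            (Matrix.replicateCol (Fin 1) g) B)ᵀ := by
        ext x y
        rcases x with u | x <;> rcases y with u' | y <;> rfl
      rw [heq]
      exact hM20.transpose
    have hM21' : (Matrix.fromBlocks (Matrix.of fun _ _ => (1:ℤ)) (Matrix.replicateRow (Fin 1) g)
        (Matrix.replicateCol (Fin 1) f) Bᵀ).IsTotallyUnimodular := by
      have heq : Matrix.fromBlocks (Matrix.of fun _ _ => (1:ℤ)) (Matrix.replicateRow (Fin 1) g)
          (Matrix.replicateCol (Fin 1) f) Bᵀ
          = (Matrix.fromBlocks (Matrix.of fun _ _ => (1:ℤ)) (Matrix.replicateRow (Fin 1) f)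
            (Matrix.replicateCol (Fin 1) g) B)ᵀ := by
        ext x y
        rcases x with u | x <;> rcases y with u' | y <;> rfl
      rw [heq]
      exact hM21.transpose
    exact Stmt14Aux.aux Aᵀ Bᵀ h g f e hM10' hM11' hM20' hM21' hl hk hlt.le g₁ g₂ f₁ f₂ ε' ε
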